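/- Let N ≥ 2 and let p_i, q_i, r_i (i = 1,…,N−1) be nonnegative real numbers with the conventions p_1 = r_{N−1} = 0 and p_j = q_j = r_j = 0 for every index j outside {1,…,N−1}. Let X be the (N−1)×(N−1) tridiagonal matrix with X_{i,i} = q_i, X_{i,i+1} = r_i, X_{i+1,i} = p_{i+1} and all other entries zero. For l = 1,…,N−1 set g_l = p_l² + q_l² + r_l² and s_l = p_l(q_{l−1} + r_{l−2}) + q_l(p_{l+1} + r_{l−1}) + r_l(p_{l+2} + q_{l+1}). If δ := min_{1 ≤ l ≤ N−1}(g_l − s_l) > 0, then X is invertible and ‖X⁻¹‖₂ ≤ δ^{−1/2}. -/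

import Mathlib

/-- The `n×n` real tridiagonal matrix with 1-indexed subdiagonal entries
`sub_{i+1}` (at position `(i+1, i)`), diagonal entries `dia_i` and superdiagonal
entries `sup_i` (at position `(i, i+1)`). -/
def triMatR (n : ℕ) (sub dia sup : ℕ → ℝ) : Matrix (Fin n) (Fin n) ℝ :=
  Matrix.of fun i j =>
    if i.val = j.val then dia (i.val + 1)
    else if i.val + 1 = j.val then sup (i.val + 1)
    else if j.val + 1 = i.val then sub (i.val + 1)
    else 0

/-- The operator norm of a real square matrix induced by the Euclidean vector norm,
i.e. its largest singular value. -/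
noncomputable def opNorm2 {n : ℕ} (M : Matrix (Fin n) (Fin n) ℝ) : ℝ :=
  ‖LinearMap.toContinuousLinearMap (Matrix.toEuclideanLin M)‖

private def Dc (p q r : ℕ → ℝ) (i : ℕ) : ℝ :=
  r i ^ 2 - r i * q (i + 1) - r i * p (i + 2)

private def Ec (p q r : ℕ → ℝ) (i : ℕ) : ℝ :=
  q (i + 1) ^ 2 - r i * q (i + 1) - q (i + 1) * p (i + 2)

private def Fc (p q r : ℕ → ℝ) (j : ℕ) : ℝ :=
  p (j + 1) ^ 2 - q j * p (j + 1) - r (j - 1) * p (j + 1)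

open Finset in
private lemma key_ineq (n : ℕ) (p q r : ℕ → ℝ)
    (hp : ∀ j, 0 ≤ p j) (hq : ∀ j, 0 ≤ q j) (hr : ∀ j, 0 ≤ r j)
    (hp1 : p 1 = 0) (hr0 : r 0 = 0) (hrn : r n = 0)
    (w : ℕ → ℝ) (hwn : w n = 0)
    (δ : ℝ)
    (hδ : ∀ i, i < n → δ ≤ (p (i + 1) ^ 2 + q (i + 1) ^ 2 + r (i + 1) ^ 2) -
        (p (i + 1) * (q i + r (i - 1)) + q (i + 1) * (p (i + 2) + r i) +
          r (i + 1) * (p (i + 3) + q (i + 2)))) :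
    δ * ∑ i ∈ range n, w i ^ 2 ≤
      ∑ i ∈ range n, (r i * w (i - 1) + q (i + 1) * w i + p (i + 2) * w (i + 1)) ^ 2 := by
  rcases n with _ | m
  · simp
  have hFc_succ : ∀ i : ℕ, Fc p q r (i + 1)
      = p (i + 2) ^ 2 - q (i + 1) * p (i + 2) - r i * p (i + 2) := by
    intro i; simp [Fc]
  -- pointwise Cauchy-type bound
  have step1 : ∑ i ∈ range (m + 1),
      (Dc p q r i * w (i - 1) ^ 2 + Ec p q r i * w i ^ 2 + Fc p q r (i + 1) * w (i + 1) ^ 2)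
      ≤ ∑ i ∈ range (m + 1),
        (r i * w (i - 1) + q (i + 1) * w i + p (i + 2) * w (i + 1)) ^ 2 := by
    apply Finset.sum_le_sum
    intro i _
    have h1 : 0 ≤ r i * q (i + 1) * (w (i - 1) + w i) ^ 2 :=
      mul_nonneg (mul_nonneg (hr i) (hq (i + 1))) (sq_nonneg _)
    have h2 : 0 ≤ q (i + 1) * p (i + 2) * (w i + w (i + 1)) ^ 2 :=
      mul_nonneg (mul_nonneg (hq (i + 1)) (hp (i + 2))) (sq_nonneg _)
    have h3 : 0 ≤ r i * p (i + 2) * (w (i - 1) + w (i + 1)) ^ 2 :=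
      mul_nonneg (mul_nonneg (hr i) (hp (i + 2))) (sq_nonneg _)
    simp only [Dc, Ec, hFc_succ]
    nlinarith [h1, h2, h3]
  -- reindex the D-part
  have hD0 : Dc p q r 0 = 0 := by simp [Dc, hr0]
  have hDm : Dc p q r (m + 1) = 0 := by simp [Dc, hrn]
  have hD : ∑ i ∈ range (m + 1), Dc p q r i * w (i - 1) ^ 2
      = ∑ i ∈ range (m + 1), Dc p q r (i + 1) * w i ^ 2 := by
    rw [Finset.sum_range_succ' (fun i => Dc p q r i * w (i - 1) ^ 2) m,
      Finset.sum_range_succ (fun i => Dc p q r (i + 1) * w i ^ 2) m]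
    simp [hD0, hDm, Nat.add_sub_cancel]
  -- reindex the F-part
  have hF0 : Fc p q r 0 = 0 := by simp [Fc, hp1]
  have hF : ∑ i ∈ range (m + 1), Fc p q r (i + 1) * w (i + 1) ^ 2
      = ∑ i ∈ range (m + 1), Fc p q r i * w i ^ 2 := by
    have h2 := Finset.sum_range_succ' (fun i => Fc p q r i * w i ^ 2) (m + 1)
    have h3 := Finset.sum_range_succ (fun i => Fc p q r i * w i ^ 2) (m + 1)
    simp only [hwn, hF0, zero_mul, mul_zero, add_zero] at h2 h3
    linarith [h2, h3]
  have hcoef : ∀ i, i < m + 1 → δ * w i ^ 2 ≤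
      (Dc p q r (i + 1) + Ec p q r i + Fc p q r i) * w i ^ 2 := by
    intro i hi
    apply mul_le_mul_of_nonneg_right _ (sq_nonneg _)
    calc δ ≤ (p (i + 1) ^ 2 + q (i + 1) ^ 2 + r (i + 1) ^ 2) -
        (p (i + 1) * (q i + r (i - 1)) + q (i + 1) * (p (i + 2) + r i) +
          r (i + 1) * (p (i + 3) + q (i + 2))) := hδ i hi
      _ = Dc p q r (i + 1) + Ec p q r i + Fc p q r i := by
          simp only [Dc, Ec, Fc, Nat.add_sub_cancel]; ring
  calc δ * ∑ i ∈ range (m + 1), w i ^ 2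
      = ∑ i ∈ range (m + 1), δ * w i ^ 2 := Finset.mul_sum _ _ _
    _ ≤ ∑ i ∈ range (m + 1), (Dc p q r (i + 1) + Ec p q r i + Fc p q r i) * w i ^ 2 :=
        Finset.sum_le_sum (fun i hi => hcoef i (Finset.mem_range.mp hi))
    _ = ∑ i ∈ range (m + 1),
        (Dc p q r i * w (i - 1) ^ 2 + Ec p q r i * w i ^ 2 + Fc p q r (i + 1) * w (i + 1) ^ 2) := by
        rw [Finset.sum_add_distrib, Finset.sum_add_distrib, hD, hF,
          ← Finset.sum_add_distrib, ← Finset.sum_add_distrib]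
        exact Finset.sum_congr rfl fun i _ => by ring
    _ ≤ _ := step1

open Matrix in
theorem stmt13 (N : ℕ) (hN : 2 ≤ N) (p q r : ℕ → ℝ)
    (hp : ∀ j, 0 ≤ p j) (hq : ∀ j, 0 ≤ q j) (hr : ∀ j, 0 ≤ r j)
    (hp1 : p 1 = 0) (hrN : r (N - 1) = 0)
    (hout : ∀ j, j = 0 ∨ N ≤ j → p j = 0 ∧ q j = 0 ∧ r j = 0)
    (δ : ℝ)
    (hδdef : δ = (Finset.Icc 1 (N - 1)).inf' (Finset.nonempty_Icc.mpr (by omega))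
      (fun l => (p l ^ 2 + q l ^ 2 + r l ^ 2) -
        (p l * (q (l - 1) + r (l - 2)) + q l * (p (l + 1) + r (l - 1)) +
          r l * (p (l + 2) + q (l + 1)))))
    (hδ : 0 < δ) :
    IsUnit (triMatR (N - 1) p q r).det ∧
    opNorm2 (triMatR (N - 1) p q r)⁻¹ ≤ (Real.sqrt δ)⁻¹ := by
  set n := N - 1 with hn
  have hn1 : 1 ≤ n := by omega
  have hr0 : r 0 = 0 := (hout 0 (Or.inl rfl)).2.2
  have hrn : r n = 0 := hrN
  set X := triMatR n p q r with hX
  set Y := Xᵀ with hY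
  -- the min over the Gerschgorin quantities
  have hδ' : ∀ i, i < n → δ ≤ (p (i + 1) ^ 2 + q (i + 1) ^ 2 + r (i + 1) ^ 2) -
      (p (i + 1) * (q i + r (i - 1)) + q (i + 1) * (p (i + 2) + r i) +
        r (i + 1) * (p (i + 3) + q (i + 2))) := by
    intro i hi
    have hmem : i + 1 ∈ Finset.Icc 1 (N - 1) := by
      simp only [Finset.mem_Icc]; omega
    have := hδdef ▸ Finset.inf'_le (b := i + 1)
      (fun l => (p l ^ 2 + q l ^ 2 + r l ^ 2) -
        (p l * (q (l - 1) + r (l - 2)) + q l * (p (l + 1) + r (l - 1)) +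
          r l * (p (l + 2) + q (l + 1)))) hmem
    have e1 : i + 1 - 1 = i := by omega
    have e2 : i + 1 - 2 = i - 1 := by omega
    simpa [e1, e2] using this
  have hsd : 0 < Real.sqrt δ := Real.sqrt_pos.mpr hδ
  -- the key lower bound for `Y = Xᵀ`
  have hlow : ∀ v : EuclideanSpace ℝ (Fin n),
      Real.sqrt δ * ‖v‖ ≤ ‖Matrix.toEuclideanLin Y v‖ := by
    intro v
    set w : ℕ → ℝ := fun j => if h : j < n then v ⟨j, h⟩ else 0 with hw
    have hwf : ∀ j : Fin n, w j.val = v j := by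
      intro j; simp [hw, j.isLt]
    have hwz : ∀ j, n ≤ j → w j = 0 := by
      intro j hj; simp [hw]; omega
    have hmulVec : ∀ i : Fin n, Matrix.toEuclideanLin Y v i =
        r i.val * w (i.val - 1) + q (i.val + 1) * w i.val + p (i.val + 2) * w (i.val + 1) := by
      intro i
      rw [Matrix.toEuclideanLin_apply]; show (Y *ᵥ (WithLp.equiv 2 (Fin n → ℝ)) v) i = _
      have : (Y *ᵥ (WithLp.equiv 2 (Fin n → ℝ)) v) i = ∑ j : Fin n, Y i j * v j := by
        simp [Matrix.mulVec, dotProduct, WithLp.equiv_apply]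
      rw [this]
      set F : ℕ → ℝ := fun jn => (if jn + 1 = i.val then r i.val * w jn else 0) +
            (if jn = i.val then q (i.val + 1) * w jn else 0) +
            (if jn = i.val + 1 then p (i.val + 2) * w jn else 0) with hF
      have hpt : ∀ j : Fin n, Y i j * v j = F j.val := by
        intro j
        have hwj : w j.val = v j := hwf j
        simp only [hY, Matrix.transpose_apply, hX, triMatR, Matrix.of_apply]
        rw [← hwj]
        simp only [hF]
        split_ifs <;>
          first
            | omega
            | (rw [show (j : ℕ) + 1 = (i : ℕ) + 1 by omega]; ring)
            | (rw [show (j : ℕ) + 1 = (i : ℕ) by omega]; ring)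
            | (rw [show (j : ℕ) + 1 = (i : ℕ) + 2 by omega]; ring)
            | ring
      rw [Finset.sum_congr rfl (fun j _ => hpt j), Fin.sum_univ_eq_sum_range F n]
      simp only [hF]
      rw [Finset.sum_add_distrib, Finset.sum_add_distrib]
      have S1 : ∑ jn ∈ Finset.range n, (if jn = i.val then q (i.val + 1) * w jn else 0)
          = q (i.val + 1) * w i.val := by
        rw [Finset.sum_ite_eq' (Finset.range n) i.val (fun jn => q (i.val + 1) * w jn)]
        simp [i.isLt]
      have S2 : ∑ jn ∈ Finset.range n, (if jn + 1 = i.val then r i.val * w jn else 0)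
          = r i.val * w (i.val - 1) := by
        rcases Nat.eq_zero_or_pos i.val with h0 | h0
        · rw [Finset.sum_eq_zero (fun jn _ => by rw [if_neg (by omega)])]
          simp [h0, hr0]
        · have : ∀ jn, (if jn + 1 = i.val then r i.val * w jn else 0)
              = (if jn = i.val - 1 then r i.val * w jn else 0) := by
            intro jn; exact if_congr (by omega) rfl rfl
          rw [Finset.sum_congr rfl (fun jn _ => this jn),
            Finset.sum_ite_eq' (Finset.range n) (i.val - 1) (fun jn => r i.val * w jn)]
          have : i.val - 1 ∈ Finset.range n := by
            simp only [Finset.mem_range]; have := i.isLt; omega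
          simp [this]
      have S3 : ∑ jn ∈ Finset.range n, (if jn = i.val + 1 then p (i.val + 2) * w jn else 0)
          = p (i.val + 2) * w (i.val + 1) := by
        rw [Finset.sum_ite_eq' (Finset.range n) (i.val + 1) (fun jn => p (i.val + 2) * w jn)]
        by_cases hin : i.val + 1 < n
        · simp [hin]
        · rw [if_neg (by simpa using hin), hwz (i.val + 1) (by omega)]
          ring
      rw [S1, S2, S3]
    -- norms as sums of squares
    have hnormsq : ∀ x : EuclideanSpace ℝ (Fin n), ‖x‖ ^ 2 = ∑ i : Fin n, x i ^ 2 := by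
      intro x
      rw [EuclideanSpace.norm_eq, Real.sq_sqrt (by positivity)]
      exact Finset.sum_congr rfl fun i _ => by rw [Real.norm_eq_abs, sq_abs]
    have hv2 : ‖v‖ ^ 2 = ∑ i ∈ Finset.range n, w i ^ 2 := by
      rw [hnormsq, ← Fin.sum_univ_eq_sum_range (fun j => w j ^ 2) n]
      exact Finset.sum_congr rfl fun i _ => by rw [hwf]
    have hTv2 : ‖Matrix.toEuclideanLin Y v‖ ^ 2 =
        ∑ i ∈ Finset.range n, (r i * w (i - 1) + q (i + 1) * w i + p (i + 2) * w (i + 1)) ^ 2 := by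
      rw [hnormsq, ← Fin.sum_univ_eq_sum_range
        (fun i => (r i * w (i - 1) + q (i + 1) * w i + p (i + 2) * w (i + 1)) ^ 2) n]
      exact Finset.sum_congr rfl fun i _ => by rw [hmulVec]
    have hkey := key_ineq n p q r hp hq hr hp1 hr0 hrn w (hwz n le_rfl) δ hδ'
    have hsq : (Real.sqrt δ * ‖v‖) ^ 2 ≤ ‖Matrix.toEuclideanLin Y v‖ ^ 2 := by
      rw [mul_pow, Real.sq_sqrt hδ.le, hv2, hTv2]; exact hkey
    have h0 : 0 ≤ Real.sqrt δ * ‖v‖ := mul_nonneg hsd.le (norm_nonneg _)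
    nlinarith [norm_nonneg (Matrix.toEuclideanLin Y v), hsq, h0]
  -- injectivity, hence invertibility
  have hinj : Function.Injective Y.mulVec := by
    intro a b hab
    have ha : Matrix.toEuclideanLin Y ((WithLp.equiv 2 (Fin n → ℝ)).symm a - (WithLp.equiv 2 (Fin n → ℝ)).symm b) = 0 := by
      rw [map_sub]
      have e : ∀ c : Fin n → ℝ, Matrix.toEuclideanLin Y ((WithLp.equiv 2 (Fin n → ℝ)).symm c)
          = (WithLp.equiv 2 (Fin n → ℝ)).symm (Y *ᵥ c) := by
        intro c; rw [Matrix.toEuclideanLin_apply]; rfl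
      rw [e, e, hab, sub_self]
    have := hlow ((WithLp.equiv 2 (Fin n → ℝ)).symm a - (WithLp.equiv 2 (Fin n → ℝ)).symm b)
    rw [ha, norm_zero] at this
    have hz : ‖(WithLp.equiv 2 (Fin n → ℝ)).symm a - (WithLp.equiv 2 (Fin n → ℝ)).symm b‖ = 0 := by
      nlinarith [norm_nonneg ((WithLp.equiv 2 (Fin n → ℝ)).symm a - (WithLp.equiv 2 (Fin n → ℝ)).symm b)]
    have := norm_eq_zero.mp hz
    have := sub_eq_zero.mp this
    exact (WithLp.equiv 2 (Fin n → ℝ)).symm.injective this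
  have hYunit : IsUnit Y := Matrix.mulVec_injective_iff_isUnit.mp hinj
  have hYdet : IsUnit Y.det := (Matrix.isUnit_iff_isUnit_det Y).mp hYunit
  have hXdet : IsUnit X.det := by
    rwa [hY, Matrix.det_transpose] at hYdet
  refine ⟨hXdet, ?_⟩
  -- relate the operator norms
  have hop : ∀ M : Matrix (Fin n) (Fin n) ℝ,
      opNorm2 M = @norm _ Matrix.instL2OpNormedAddCommGroup.toNorm M := by
    intro M
    rw [Matrix.l2_opNorm_def, LinearEquiv.trans_apply]
    rfl
  have hYYinv : Y * Y⁻¹ = 1 := Matrix.mul_nonsing_inv Y hYdet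
  have hXY : (X⁻¹)ᴴ = Y⁻¹ := by
    rw [Matrix.conjTranspose_eq_transpose_of_trivial, hY, Matrix.transpose_nonsing_inv]
  have hnormeq : opNorm2 X⁻¹ = opNorm2 Y⁻¹ := by
    rw [hop, hop, ← hXY, Matrix.l2_opNorm_conjTranspose]
  rw [hnormeq]
  rw [show opNorm2 Y⁻¹ = ‖LinearMap.toContinuousLinearMap (Matrix.toEuclideanLin Y⁻¹)‖ from rfl]
  apply ContinuousLinearMap.opNorm_le_bound _ (inv_nonneg.mpr hsd.le)
  intro u
  have hcoe : LinearMap.toContinuousLinearMap (Matrix.toEuclideanLin Y⁻¹) u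
      = Matrix.toEuclideanLin Y⁻¹ u := rfl
  rw [hcoe]
  set x := Matrix.toEuclideanLin Y⁻¹ u with hx
  have hfx : Matrix.toEuclideanLin Y x = u := by
    rw [hx, Matrix.toEuclideanLin_apply, Matrix.toEuclideanLin_apply, WithLp.ofLp_toLp,
      Matrix.mulVec_mulVec, hYYinv, Matrix.one_mulVec, WithLp.toLp_ofLp]
  have := hlow x
  rw [hfx] at this
  calc ‖x‖ = (Real.sqrt δ)⁻¹ * (Real.sqrt δ * ‖x‖) := by field_simp
    _ ≤ (Real.sqrt δ)⁻¹ * ‖u‖ := mul_le_mul_of_nonneg_left this (inv_nonneg.mpr hsd.le)
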